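/- With P = conv(v_1,...,v_s) as above (v_i = a_ie_i for i ≤ d, ⟨v_i, α_0⟩ < 1 for i > d), let α ∈ ∂P \ conv(v_1,...,v_d) with α_i > 0 for all i = 1,...,d. Then the vector α' = (α_1,...,α_{d-1},0) does not belong to P. -/

import Mathlib

/-- With `P = conv(v 1, …, v s)` (`v i = a i • e i` for `i ≤ d`, and
`⟨v i, α₀⟩ < 1` with `v i ∈ ℕ^d` for `i > d`), if `α` lies in the relative
boundary of `P`, not in `conv(v 1, …, v d)`, and has all coordinates positive,
then `α' = (α 1, …, α (d-1), 0)` does not belong to `P`. -/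
theorem truncation_not_mem_polytope (d s : ℕ) (hd : 0 < d) (hds : d ≤ s)
    (a : Fin d → ℕ) (ha : ∀ i, 0 < a i)
    (v : Fin s → (Fin d → ℝ))
    (hv1 : ∀ i : Fin d, v (Fin.castLE hds i) = Pi.single i (a i : ℝ))
    (hvnat : ∀ i j, ∃ m : ℕ, v i j = (m : ℝ))
    (hlt : ∀ i : Fin s, d ≤ (i : ℕ) → ∑ j, v i j / (a j : ℝ) < 1)
    (α : Fin d → ℝ)
    (hαP : α ∈ intrinsicFrontier ℝ (convexHull ℝ (Set.range v)))
    (hαH : α ∉ convexHull ℝ (Set.range fun i : Fin d => v (Fin.castLE hds i)))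
    (hpos : ∀ i, 0 < α i) :
    Function.update α ⟨d - 1, by omega⟩ 0 ∉ convexHull ℝ (Set.range v) := by
  classical
  intro hmem
  set P := convexHull ℝ (Set.range v) with hPdef
  have hPconv : Convex ℝ P := convex_convexHull ℝ _
  have hPclosed : IsClosed P := ((Set.finite_range v).isCompact_convexHull (𝕜 := ℝ)).isClosed
  have hαmem : α ∈ P := intrinsicFrontier_subset hPclosed hαP
  set f : (Fin d → ℝ) → ℝ := fun x => ∑ j, x j / (a j : ℝ) with hfdef
  have hane : ∀ j : Fin d, (a j : ℝ) ≠ 0 := fun j => Nat.cast_ne_zero.mpr (ha j).ne'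
  have hapos : ∀ j : Fin d, (0:ℝ) < a j := fun j => Nat.cast_pos.mpr (ha j)
  have hfv1 : ∀ j : Fin d, f (v (Fin.castLE hds j)) = 1 := by
    intro j
    simp only [hfdef, hv1 j]
    rw [Finset.sum_eq_single j]
    · rw [Pi.single_eq_same]; exact div_self (hane j)
    · intro b _ hb
      rw [Pi.single_eq_of_ne hb, zero_div]
    · simp
  have hfv_le : ∀ i : Fin s, f (v i) ≤ 1 := by
    intro i
    by_cases h : (i : ℕ) < d
    · have hi : i = Fin.castLE hds ⟨i, h⟩ := by ext; rfl
      rw [hi, hfv1]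
    · exact (hlt i (le_of_not_gt h)).le
  -- obtain convex combination weights for α
  have hrep := hαmem
  rw [hPdef, convexHull_range_eq_exists_affineCombination] at hrep
  obtain ⟨t, w0, hw0nn, hw0sum, hw0comb⟩ := hrep
  rw [Finset.affineCombination_eq_linear_combination _ _ _ hw0sum] at hw0comb
  have hfα : f α = ∑ i ∈ t, w0 i * f (v i) := by
    calc f α = ∑ j, (∑ i ∈ t, w0 i • v i) j / (a j : ℝ) := by rw [hw0comb]
      _ = ∑ j, ∑ i ∈ t, (w0 i * v i j) / (a j : ℝ) := by
          refine Finset.sum_congr rfl fun j _ => ?_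
          rw [Finset.sum_apply, Finset.sum_div]
          rfl
      _ = ∑ i ∈ t, ∑ j, (w0 i * v i j) / (a j : ℝ) := Finset.sum_comm
      _ = ∑ i ∈ t, w0 i * f (v i) := by
          refine Finset.sum_congr rfl fun i _ => ?_
          rw [hfdef, Finset.mul_sum]
          exact Finset.sum_congr rfl fun j _ => (mul_div_assoc _ _ _)
  have hfα_le : f α ≤ 1 := by
    rw [hfα, ← hw0sum]
    refine Finset.sum_le_sum fun i hi => ?_
    calc w0 i * f (v i) ≤ w0 i * 1 :=
          mul_le_mul_of_nonneg_left (hfv_le i) (hw0nn i hi)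
      _ = w0 i := mul_one _
  -- f α < 1, otherwise α ∈ conv(v 1, …, v d)
  have hfαlt : f α < 1 := by
    rcases lt_or_eq_of_le hfα_le with h | h
    · exact h
    exfalso
    have hsum0 : ∑ i ∈ t, w0 i * (1 - f (v i)) = 0 := by
      have he : ∑ i ∈ t, w0 i * (1 - f (v i))
          = (∑ i ∈ t, w0 i) - ∑ i ∈ t, w0 i * f (v i) := by
        rw [← Finset.sum_sub_distrib]
        exact Finset.sum_congr rfl fun i _ => by ring
      rw [he, hw0sum, ← hfα, h]
      ring
    have hterm := (Finset.sum_eq_zero_iff_of_nonneg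
      (fun i hi => mul_nonneg (hw0nn i hi) (by linarith [hfv_le i]))).mp hsum0
    set w : Fin s → ℝ := fun i => if i ∈ t then w0 i else 0 with hwdef
    have hwnn : ∀ i, 0 ≤ w i := by
      intro i; simp only [hwdef]
      split
      · exact hw0nn _ ‹_›
      · exact le_refl _
    have hwt : ∀ i ∈ t, w i = w0 i := fun i hi => by simp [hwdef, hi]
    have hwsupp : ∀ i : Fin s, d ≤ (i : ℕ) → w i = 0 := by
      intro i hi
      by_cases hit : i ∈ t
      · rw [hwt i hit]
        have h0 := hterm i hit
        have h1 : 0 < 1 - f (v i) := by linarith [hlt i hi]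
        rcases mul_eq_zero.mp h0 with h2 | h2
        · exact h2
        · linarith
      · simp [hwdef, hit]
    have hwsum : ∑ i, w i = 1 := by
      rw [← hw0sum]
      refine (Finset.sum_subset (Finset.subset_univ t) fun i _ hi => by
        simp [hwdef, hi]).symm.trans ?_
      exact Finset.sum_congr rfl hwt
    have hwcomb : ∑ i, w i • v i = α := by
      rw [← hw0comb]
      refine (Finset.sum_subset (Finset.subset_univ t) fun i _ hi => by
        simp [hwdef, hi]).symm.trans ?_
      exact Finset.sum_congr rfl fun i hi => by rw [hwt i hi]
    have himg : ∀ i : Fin s, i ∉ Finset.univ.image (Fin.castLE hds) → w i = 0 := by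
      intro i hi
      refine hwsupp i (le_of_not_gt fun h => hi ?_)
      exact Finset.mem_image.mpr ⟨⟨i, h⟩, Finset.mem_univ _, by ext; rfl⟩
    have hinj : Function.Injective (Fin.castLE hds) := Fin.castLE_injective hds
    apply hαH
    rw [convexHull_range_eq_exists_affineCombination]
    have hwsum' : ∑ j : Fin d, w (Fin.castLE hds j) = 1 := by
      rw [← hwsum]
      rw [← Finset.sum_image (fun x _ y _ h => hinj h)]
      exact Finset.sum_subset (Finset.subset_univ _) fun i _ hi => himg i hi
    refine ⟨Finset.univ, fun j => w (Fin.castLE hds j), fun j _ => hwnn _, hwsum', ?_⟩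
    rw [Finset.affineCombination_eq_linear_combination _ _ _ hwsum']
    rw [← hwcomb]
    have himage : ∑ i ∈ Finset.univ.image (Fin.castLE hds), w i • v i
        = ∑ i : Fin d, w (Fin.castLE hds i) • v (Fin.castLE hds i) :=
      Finset.sum_image (fun x _ y _ h => hinj h)
    rw [← himage]
    exact Finset.sum_subset (Finset.subset_univ _) fun i _ hi => by rw [himg i hi, zero_smul]
  -- Main part: α' ∈ P implies α is interior to P, contradiction.
  have hk : d - 1 < d := by omega
  set k : Fin d := ⟨d - 1, hk⟩ with hkdef
  have hmem' : Function.update α k 0 ∈ P := hmem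
  set F : ℝ := ∑ j ∈ Finset.univ.erase k, α j / (a j : ℝ) with hFdef
  have hFA : F + α k / (a k : ℝ) = f α := Finset.sum_erase_add _ _ (Finset.mem_univ k)
  have hαk : 0 < α k / (a k : ℝ) := div_pos (hpos k) (hapos k)
  have hFlt : F < f α := by linarith
  have hF1 : 0 < 1 - F := by linarith
  set g : (Fin d → ℝ) → ℝ := fun x => (1 - f x) / (1 - F) with hgdef
  set c : Fin d → (Fin d → ℝ) → ℝ :=
    fun j x => if j = k then x k / (a k : ℝ) else (x j - g x * α j) / (a j : ℝ) with hcdef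
  have hfcont : Continuous f := by
    rw [hfdef]
    exact continuous_finset_sum _ fun j _ => (continuous_apply j).div_const _
  have hgcont : Continuous g := (continuous_const.sub hfcont).div_const _
  have hccont : ∀ j, Continuous (c j) := by
    intro j
    rw [hcdef]
    by_cases hj : j = k
    · simp only [hj, if_true]
      exact (continuous_apply k).div_const _
    · simp only [hj, if_false]
      exact ((continuous_apply j).sub (hgcont.mul continuous_const)).div_const _
  set U : Set (Fin d → ℝ) := {x | 0 < g x ∧ ∀ j, 0 < c j x} with hUdef
  have hUopen : IsOpen U := by
    have h1 : IsOpen {x : Fin d → ℝ | 0 < g x} := isOpen_lt continuous_const hgcont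
    have h2 : IsOpen {x : Fin d → ℝ | ∀ j, 0 < c j x} := by
      rw [Set.setOf_forall]
      exact isOpen_iInter_of_finite fun j => isOpen_lt continuous_const (hccont j)
    exact h1.inter h2
  have hgα1 : g α < 1 := by
    rw [hgdef]
    rw [div_lt_one hF1]
    linarith
  have hαU : α ∈ U := by
    refine ⟨div_pos (by linarith) hF1, fun j => ?_⟩
    rw [hcdef]
    by_cases hj : j = k
    · simp only [hj, if_true]
      exact hαk
    · simp only [hj, if_false]
      refine div_pos ?_ (hapos j)
      nlinarith [hpos j]
  have hUP : U ⊆ P := by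
    rintro x ⟨hg, hc⟩
    have hsumc : ∑ j, c j x = f x - g x * F := by
      rw [← Finset.sum_erase_add _ _ (Finset.mem_univ k)]
      have h1 : ∑ j ∈ Finset.univ.erase k, c j x
          = (∑ j ∈ Finset.univ.erase k, x j / (a j : ℝ)) - g x * F := by
        rw [hFdef, Finset.mul_sum, ← Finset.sum_sub_distrib]
        refine Finset.sum_congr rfl fun j hj => ?_
        rw [hcdef]
        simp only [Finset.ne_of_mem_erase hj, if_false]
        ring
      have h2 : c k x = x k / (a k : ℝ) := by rw [hcdef]; simp
      have h3 : (∑ j ∈ Finset.univ.erase k, x j / (a j : ℝ)) + x k / (a k : ℝ) = f x :=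
        Finset.sum_erase_add _ _ (Finset.mem_univ k)
      rw [h1, h2]
      linarith
    have hg1F : g x * (1 - F) = 1 - f x := div_mul_cancel₀ _ (by linarith)
    have hsum1 : g x + ∑ j, c j x = 1 := by
      rw [hsumc]
      nlinarith [hg1F]
    have heq : x = g x • Function.update α k 0 + ∑ j, c j x • v (Fin.castLE hds j) := by
      funext i
      simp only [Pi.add_apply, Pi.smul_apply, smul_eq_mul, Finset.sum_apply]
      have hsum : ∑ j, c j x * v (Fin.castLE hds j) i = c i x * (a i : ℝ) := by
        rw [Finset.sum_eq_single i]
        · rw [hv1 i, Pi.single_eq_same]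
        · intro b _ hb
          rw [hv1 b, Pi.single_eq_of_ne (Ne.symm hb), mul_zero]
        · simp
      rw [hsum]
      rw [Function.update_apply]
      by_cases hi : i = k
      · simp only [hi, if_true, mul_zero, zero_add]
        rw [hcdef]
        simp only [if_true]
        exact (div_mul_cancel₀ _ (hane k)).symm
      · simp only [hi, if_false]
        rw [hcdef]
        simp only [hi, if_false]
        rw [div_mul_cancel₀ _ (hane i)]
        ring
    rw [heq]
    let Z : Fin (d + 1) → (Fin d → ℝ) :=
      Fin.cons (Function.update α k 0) (fun j => v (Fin.castLE hds j))
    let W : Fin (d + 1) → ℝ := Fin.cons (g x) (fun j => c j x)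
    have hzmem : ∀ i : Fin (d + 1), Z i ∈ P := by
      intro i
      induction i using Fin.cases with
      | zero => exact hmem'
      | succ j => exact subset_convexHull ℝ _ ⟨Fin.castLE hds j, rfl⟩
    have hwnn2 : ∀ i : Fin (d + 1), 0 ≤ W i := by
      intro i
      induction i using Fin.cases with
      | zero => exact hg.le
      | succ j => exact (hc j).le
    have hws2 : ∑ i : Fin (d + 1), W i = 1 := by
      rw [Fin.sum_univ_succ]
      simpa [W] using hsum1
    have hmem2 := hPconv.sum_mem (fun i _ => hwnn2 i) hws2 (fun i _ => hzmem i)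
    rw [Fin.sum_univ_succ] at hmem2
    simpa [W, Z] using hmem2
  have hint : α ∈ interior P := mem_interior.mpr ⟨U, hUP, hUopen, hαU⟩
  have hfr := intrinsicFrontier_subset_frontier hαP
  exact hfr.2 hint
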